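/- Let α_1,…,α_{n−1}, β_1,…,β_{n−1} be any integers with h_i = α_i d_i + β_i f_i for all i = 1,…,n−1. Then the common zero set in K^{2n} of the n+1 binomials F_1,…,F_{n−1}, F, G is exactly V; that is, a point (x_1,…,x_n,y_1,…,y_n) ∈ K^{2n} satisfies F_1 = ⋯ = F_{n−1} = F = G = 0 if and only if it lies in the image of φ. -/

import Mathlib

open MvPolynomial

lemma pow_adjust {K : Type*} [Field K] {ζ : K} {m e : ℕ} (hm : 0 < m)
    (hζ : ζ ^ m = 1) (hcop : Nat.Coprime m e) : ∃ η : K, η ^ m = 1 ∧ η ^ e = ζ := by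
  have hζ0 : ζ ≠ 0 := by
    intro h0; rw [h0, zero_pow hm.ne'] at hζ; exact zero_ne_one hζ
  have hcop' : IsCoprime (e : ℤ) (m : ℤ) := Nat.isCoprime_iff_coprime.mpr hcop.symm
  obtain ⟨a, b, hab⟩ := hcop'
  refine ⟨ζ ^ a, ?_, ?_⟩
  · rw [← zpow_natCast (ζ ^ a), ← zpow_mul, mul_comm, zpow_mul, zpow_natCast, hζ, one_zpow]
  · rw [← zpow_natCast (ζ ^ a), ← zpow_mul]
    have h1 : a * (e : ℤ) = 1 - b * m := by linarith
    rw [h1, zpow_sub₀ hζ0, zpow_one, mul_comm b (m : ℤ), zpow_mul, zpow_natCast, hζ, one_zpow,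
      div_one]

lemma root_decomp {K : Type*} [Field K] {ι : Type*} [DecidableEq ι] (s : Finset ι)
    (d : ι → ℕ) (hd : ∀ i, 0 < d i)
    (hcop : ∀ i ∈ s, ∀ j ∈ s, i ≠ j → Nat.Coprime (d i) (d j))
    {ε : K} (hε : ε ^ (∏ i ∈ s, d i) = 1) :
    ∃ ζ : ι → K, (∀ i, ζ i ^ d i = 1) ∧ ∏ i ∈ s, ζ i = ε := by
  induction s using Finset.cons_induction_on generalizing ε with
  | empty =>
    refine ⟨fun _ => 1, fun i => one_pow _, ?_⟩
    simpa using hε.symm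
  | @cons a s ha ih =>
    rw [Finset.prod_cons] at hε
    have hP : 0 < ∏ i ∈ s, d i := Finset.prod_pos fun i _ => hd i
    have hε0 : ε ≠ 0 := by
      intro h0; rw [h0, zero_pow (Nat.mul_pos (hd a) hP).ne'] at hε; exact zero_ne_one hε
    have hcop1 : Nat.Coprime (d a) (∏ i ∈ s, d i) :=
      Nat.Coprime.prod_right fun j hj =>
        hcop a (Finset.mem_cons_self a s) j (Finset.mem_cons_of_mem hj)
          (by rintro rfl; exact ha hj)
    obtain ⟨r, t, hrt⟩ := Nat.isCoprime_iff_coprime.mpr hcop1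
    set P := ∏ i ∈ s, d i with hPdef
    set ε₁ : K := ε ^ (t * (P : ℤ)) with hε₁def
    set ε₂ : K := ε ^ (r * (d a : ℤ)) with hε₂def
    have hmul : ε₁ * ε₂ = ε := by
      rw [hε₁def, hε₂def, ← zpow_add₀ hε0]
      have h1 : t * (P : ℤ) + r * (d a) = 1 := by linarith
      rw [h1, zpow_one]
    have hεz : ε ^ ((d a : ℤ) * (P : ℤ)) = 1 := by
      rw [← Int.natCast_mul, zpow_natCast]; exact_mod_cast hε
    have hε₁ : ε₁ ^ d a = 1 := by
      rw [hε₁def, ← zpow_natCast, ← zpow_mul,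
        show t * (P : ℤ) * (d a) = ((d a : ℤ) * P) * t by ring, zpow_mul, hεz, one_zpow]
    have hε₂ : ε₂ ^ P = 1 := by
      rw [hε₂def, ← zpow_natCast, ← zpow_mul,
        show r * (d a : ℤ) * P = ((d a : ℤ) * P) * r by ring, zpow_mul, hεz, one_zpow]
    obtain ⟨ζ', hζ'1, hζ'2⟩ := ih
      (fun i hi => fun j hj => hcop i (Finset.mem_cons_of_mem hi) j (Finset.mem_cons_of_mem hj))
      hε₂
    refine ⟨Function.update ζ' a ε₁, ?_, ?_⟩
    · intro i
      by_cases hia : i = a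
      · subst hia; simpa using hε₁
      · simpa [Function.update_of_ne hia] using hζ'1 i
    · rw [Finset.prod_cons, Function.update_self]
      have hre : ∏ x ∈ s, Function.update ζ' a ε₁ x = ∏ x ∈ s, ζ' x :=
        Finset.prod_congr rfl fun j hj =>
          Function.update_of_ne (by rintro rfl; exact ha hj) _ _
      rw [hre, hζ'2, hmul]

lemma step1 {K : Type*} [Field K] [IsAlgClosed K] {d f g : ℕ}
    (hd : 0 < d) (hf : 0 < f) (hg : 0 < g) (hdf : Nat.Coprime d f)
    {x y xn : K} (E : y ^ d = x ^ f * xn ^ (d * g)) :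
    ∃ u : K, u ^ d = x ∧ y = u ^ f * xn ^ g := by
  obtain ⟨v, hv⟩ := IsAlgClosed.exists_pow_nat_eq x hd
  have key : (v ^ f * xn ^ g) ^ d = y ^ d := by
    rw [E, mul_pow, ← pow_mul, ← pow_mul, mul_comm f d, pow_mul, hv, mul_comm g d]
  by_cases hz : v ^ f * xn ^ g = 0
  · have hy0 : y = 0 := by
      have : y ^ d = 0 := by rw [← key, hz, zero_pow hd.ne']
      exact pow_eq_zero_iff hd.ne' |>.mp this
    rcases mul_eq_zero.mp hz with hv0 | hxn0
    · have hv0 : v = 0 := pow_eq_zero_iff hf.ne' |>.mp hv0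
      refine ⟨0, ?_, ?_⟩
      · rw [← hv, hv0]
      · rw [hy0, zero_pow hf.ne', zero_mul]
    · have hxn0 : xn = 0 := pow_eq_zero_iff hg.ne' |>.mp hxn0
      exact ⟨v, hv, by rw [hy0, hxn0, zero_pow hg.ne', mul_zero]⟩
  · set ζ : K := y / (v ^ f * xn ^ g) with hζdef
    have hζ : ζ ^ d = 1 := by
      have hyd : y ^ d ≠ 0 := by rw [← key]; exact pow_ne_zero d hz
      rw [hζdef, div_pow, key, div_self hyd]
    obtain ⟨η, hη1, hη2⟩ := pow_adjust hd hζ hdf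
    refine ⟨η * v, ?_, ?_⟩
    · rw [mul_pow, hη1, one_mul, hv]
    · rw [mul_pow, mul_assoc, hη2, hζdef, div_mul_cancel₀]
      exact hz

lemma idF {K : Type*} [CommRing K] {m : ℕ} (d h : Fin m → ℕ) (hd : ∀ i, 0 < d i)
    (u : Fin m → K) :
    (∏ i, u i ^ h i) ^ (∏ j, d j) = ∏ i, (u i ^ d i) ^ (h i * ((∏ j, d j) / d i)) := by
  rw [← Finset.prod_pow]
  refine Finset.prod_congr rfl fun i _ => ?_
  rw [← pow_mul, ← pow_mul]
  congr 1
  obtain ⟨c, hc⟩ := Finset.dvd_prod_of_mem d (Finset.mem_univ i)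
  rw [hc, Nat.mul_div_cancel_left c (hd i)]
  ring

lemma idG {K : Type*} [CommRing K] {m : ℕ} (d f g h : Fin m → ℕ)
    (α β : Fin m → ℤ) (hbez : ∀ i, (h i : ℤ) = α i * d i + β i * f i)
    (u : Fin m → K) (xn : K) :
    xn ^ (-(∑ i, β i * g i)).toNat * (∏ i, (u i ^ d i) ^ (α i).toNat)
        * (∏ i, (u i ^ f i * xn ^ g i) ^ (β i).toNat)
      = (∏ i, u i ^ h i) * xn ^ ((∑ i, β i * g i)).toNat
        * (∏ i, (u i ^ d i) ^ (-(α i)).toNat)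
        * (∏ i, (u i ^ f i * xn ^ g i) ^ (-(β i)).toNat) := by
  have hexp1 : ∀ i : Fin m, d i * (α i).toNat + f i * (β i).toNat
      = h i + (d i * (-(α i)).toNat + f i * (-(β i)).toNat) := by
    intro i
    have hα := Int.toNat_sub_toNat_neg (α i)
    have hβ := Int.toNat_sub_toNat_neg (β i)
    have hz : (d i : ℤ) * (α i).toNat + f i * (β i).toNat
        = h i + (d i * (-(α i)).toNat + f i * (-(β i)).toNat) := by
      linear_combination (d i : ℤ) * hα + (f i : ℤ) * hβ - hbez i
    exact_mod_cast hz
  have hexp2 : (-(∑ i, β i * g i)).toNat + ∑ i, g i * (β i).toNat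
      = ((∑ i, β i * g i)).toNat + ∑ i, g i * (-(β i)).toNat := by
    have hsum : (∑ i, (g i : ℤ) * ((β i).toNat : ℤ)) - ∑ i, (g i : ℤ) * (((-(β i)).toNat : ℕ) : ℤ)
        = ∑ i, β i * g i := by
      rw [← Finset.sum_sub_distrib]
      exact Finset.sum_congr rfl fun i _ => by
        linear_combination (g i : ℤ) * Int.toNat_sub_toNat_neg (β i)
    have hz : (((-(∑ i, β i * g i)).toNat : ℕ) : ℤ) + ∑ i, (g i : ℤ) * ((β i).toNat : ℤ)
        = (((∑ i, β i * g i).toNat : ℕ) : ℤ) + ∑ i, (g i : ℤ) * (((-(β i)).toNat : ℕ) : ℤ) := by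
      have h1 := Int.toNat_sub_toNat_neg (∑ i, β i * g i)
      linarith [hsum, h1]
    exact_mod_cast hz
  simp only [mul_pow, ← pow_mul]
  rw [Finset.prod_mul_distrib, Finset.prod_mul_distrib,
    Finset.prod_pow_eq_pow_sum, Finset.prod_pow_eq_pow_sum]
  have m1 : (∏ i, u i ^ (d i * (α i).toNat)) * ∏ i, u i ^ (f i * (β i).toNat)
      = ∏ i, u i ^ (d i * (α i).toNat + f i * (β i).toNat) := by
    rw [← Finset.prod_mul_distrib]
    exact Finset.prod_congr rfl fun i _ => (pow_add _ _ _).symm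
  have m2 : (∏ i, u i ^ h i) * (∏ i, u i ^ (d i * (-(α i)).toNat))
        * ∏ i, u i ^ (f i * (-(β i)).toNat)
      = ∏ i, u i ^ (h i + (d i * (-(α i)).toNat + f i * (-(β i)).toNat)) := by
    rw [← Finset.prod_mul_distrib, ← Finset.prod_mul_distrib]
    exact Finset.prod_congr rfl fun i _ => by rw [pow_add, pow_add, mul_assoc]
  have m3 : (∏ i, u i ^ (d i * (α i).toNat + f i * (β i).toNat))
      = ∏ i, u i ^ (h i + (d i * (-(α i)).toNat + f i * (-(β i)).toNat)) :=
    Finset.prod_congr rfl fun i _ => by rw [hexp1 i]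
  calc xn ^ (-(∑ i, β i * g i)).toNat * (∏ i, u i ^ (d i * (α i).toNat))
        * ((∏ i, u i ^ (f i * (β i).toNat)) * xn ^ (∑ i, g i * (β i).toNat))
      = xn ^ ((-(∑ i, β i * g i)).toNat + ∑ i, g i * (β i).toNat)
          * ∏ i, u i ^ (d i * (α i).toNat + f i * (β i).toNat) := by
        rw [← m1, pow_add]; ring
    _ = xn ^ (((∑ i, β i * g i)).toNat + ∑ i, g i * (-(β i)).toNat)
          * ∏ i, u i ^ (h i + (d i * (-(α i)).toNat + f i * (-(β i)).toNat)) := by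
        rw [m3, hexp2]
    _ = (∏ i, u i ^ h i) * xn ^ ((∑ i, β i * g i)).toNat
          * (∏ i, u i ^ (d i * (-(α i)).toNat))
          * ((∏ i, u i ^ (f i * (-(β i)).toNat)) * xn ^ (∑ i, g i * (-(β i)).toNat)) := by
        rw [← m2, pow_add]; ring
lemma key_lemma {K : Type*} [Field K] [IsAlgClosed K] {m : ℕ}
    (d f g h : Fin m → ℕ)
    (hd : ∀ i, 0 < d i) (hf : ∀ i, 0 < f i) (hg : ∀ i, 0 < g i) (hh : ∀ i, 0 < h i)
    (hdf : ∀ i, Nat.Coprime (d i) (f i)) (hdh : ∀ i, Nat.Coprime (d i) (h i))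
    (hdd : ∀ i j, i ≠ j → Nat.Coprime (d i) (d j))
    (α β : Fin m → ℤ) (hbez : ∀ i, (h i : ℤ) = α i * d i + β i * f i)
    (x y : Fin m → K) (xn yn : K)
    (E1 : ∀ i, y i ^ d i = x i ^ f i * xn ^ (d i * g i))
    (E2 : yn ^ (∏ j, d j) = ∏ i, x i ^ (h i * ((∏ j, d j) / d i)))
    (E3 : xn ^ (-(∑ i, β i * g i)).toNat * (∏ i, x i ^ (α i).toNat)
            * (∏ i, y i ^ (β i).toNat)
        = yn * xn ^ ((∑ i, β i * g i)).toNat * (∏ i, x i ^ (-(α i)).toNat)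
            * (∏ i, y i ^ (-(β i)).toNat)) :
    ∃ u : Fin m → K, (∀ i, u i ^ d i = x i) ∧ (∀ i, y i = u i ^ f i * xn ^ g i)
      ∧ yn = ∏ i, u i ^ h i := by
  choose u hu1 hu2 using fun i => step1 (hd i) (hf i) (hg i) (hdf i) (E1 i)
  have hDpos : 0 < ∏ j, d j := Finset.prod_pos fun i _ => hd i
  have hE2' : yn ^ (∏ j, d j) = (∏ i, u i ^ h i) ^ (∏ j, d j) := by
    rw [E2, idF d h hd u]
    exact Finset.prod_congr rfl fun i _ => by rw [hu1 i]
  by_cases ht : (∏ i, u i ^ h i) = 0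
  · refine ⟨u, hu1, hu2, ?_⟩
    rw [ht]
    have : yn ^ (∏ j, d j) = 0 := by rw [hE2', ht, zero_pow hDpos.ne']
    exact pow_eq_zero_iff hDpos.ne' |>.mp this
  · have hu0 : ∀ i, u i ≠ 0 := by
      intro i hi
      exact ht (Finset.prod_eq_zero (Finset.mem_univ i) (by rw [hi, zero_pow (hh i).ne']))
    by_cases hxn : xn = 0
    · have hε : (yn / ∏ i, u i ^ h i) ^ (∏ j, d j) = 1 := by
        rw [div_pow, hE2', div_self (pow_ne_zero _ ht)]
      obtain ⟨ζ, hζ1, hζ2⟩ := root_decomp Finset.univ d hd (fun i _ j _ hij => hdd i j hij) hε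
      choose η hη1 hη2 using fun i => pow_adjust (hd i) (hζ1 i) (hdh i)
      refine ⟨fun i => η i * u i, ?_, ?_, ?_⟩
      · intro i; rw [mul_pow, hη1 i, one_mul, hu1 i]
      · intro i; rw [hu2 i, hxn, zero_pow (hg i).ne', mul_zero, mul_zero]
      · have hsplit : ∏ i, (η i * u i) ^ h i = (∏ i, ζ i) * ∏ i, u i ^ h i := by
          simp only [mul_pow]
          rw [Finset.prod_mul_distrib]
          congr 1
          exact Finset.prod_congr rfl fun i _ => hη2 i
        rw [hsplit, hζ2, div_mul_cancel₀ _ ht]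
    · refine ⟨u, hu1, hu2, ?_⟩
      have hx' : ∀ k : Fin m → ℕ, ∏ i, x i ^ k i = ∏ i, (u i ^ d i) ^ k i := fun k =>
        Finset.prod_congr rfl fun i _ => by rw [hu1 i]
      have hy' : ∀ k : Fin m → ℕ, ∏ i, y i ^ k i = ∏ i, (u i ^ f i * xn ^ g i) ^ k i := fun k =>
        Finset.prod_congr rfl fun i _ => by rw [hu2 i]
      rw [hx' _, hx' _, hy' _, hy' _] at E3
      have h5 := E3.symm.trans (idG d f g h α β hbez u xn)
      have hC : xn ^ ((∑ i, β i * g i)).toNat * (∏ i, (u i ^ d i) ^ (-(α i)).toNat)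
          * (∏ i, (u i ^ f i * xn ^ g i) ^ (-(β i)).toNat) ≠ 0 := by
        apply mul_ne_zero (mul_ne_zero (pow_ne_zero _ hxn) ?_) ?_
        · exact Finset.prod_ne_zero_iff.mpr fun i _ => pow_ne_zero _ (pow_ne_zero _ (hu0 i))
        · exact Finset.prod_ne_zero_iff.mpr fun i _ =>
            pow_ne_zero _ (mul_ne_zero (pow_ne_zero _ (hu0 i)) (pow_ne_zero _ hxn))
      have h7 : yn * (xn ^ ((∑ i, β i * g i)).toNat * (∏ i, (u i ^ d i) ^ (-(α i)).toNat)
          * (∏ i, (u i ^ f i * xn ^ g i) ^ (-(β i)).toNat))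
          = (∏ i, u i ^ h i) * (xn ^ ((∑ i, β i * g i)).toNat
            * (∏ i, (u i ^ d i) ^ (-(α i)).toNat)
            * (∏ i, (u i ^ f i * xn ^ g i) ^ (-(β i)).toNat)) := by
        linear_combination h5
      exact mul_right_cancel₀ hC h7




/-- The parametrization map `φ : K^n → K^{2n}` of the toric variety `V`. -/
noncomputable def phiMap {K : Type*} [Field K] (n : ℕ)
    (d f g h : Fin (n - 1) → ℕ) (u : Fin n → K) : Fin n ⊕ Fin n → K :=
  Sum.elim
    (fun i => if hi : i.1 < n - 1 then u i ^ d ⟨i.1, hi⟩ else u i)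
    (fun i =>
      if hi : i.1 < n - 1 then
        u i ^ f ⟨i.1, hi⟩ * u ⟨n - 1, by have := i.isLt; omega⟩ ^ g ⟨i.1, hi⟩
      else ∏ j : Fin (n - 1), u (Fin.castLE (by omega) j) ^ h j)

/-- The last index of `Fin n` (corresponding to the variables `x_n`, `y_n`). -/
def lastIdx (n : ℕ) (hn : 0 < n) : Fin n := ⟨n - 1, by omega⟩

/-- `F_i = y_i^{d_i} - x_i^{f_i} x_n^{d_i g_i}`. -/
noncomputable def Fi (K : Type*) [Field K] (n : ℕ) (hn : 0 < n)
    (d f g : Fin (n - 1) → ℕ) (i : Fin (n - 1)) : MvPolynomial (Fin n ⊕ Fin n) K :=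
  X (Sum.inr (Fin.castLE (by omega) i)) ^ d i
    - X (Sum.inl (Fin.castLE (by omega) i)) ^ f i
        * X (Sum.inl (lastIdx n hn)) ^ (d i * g i)

/-- `F = y_n^D - x_1^{h_1 D/d_1} ⋯ x_{n-1}^{h_{n-1} D/d_{n-1}}` where `D = d_1 ⋯ d_{n-1}`. -/
noncomputable def Fbig (K : Type*) [Field K] (n : ℕ) (hn : 0 < n)
    (d h : Fin (n - 1) → ℕ) : MvPolynomial (Fin n ⊕ Fin n) K :=
  X (Sum.inr (lastIdx n hn)) ^ (∏ j, d j)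
    - ∏ i : Fin (n - 1),
        X (Sum.inl (Fin.castLE (by omega) i)) ^ (h i * ((∏ j, d j) / d i))

/-- `G = x_n^{(-c)⁺} ∏_{αᵢ ≥ 0} x_i^{α_i} ∏_{βᵢ ≥ 0} y_i^{β_i}
        - y_n x_n^{c⁺} ∏_{αᵢ < 0} x_i^{-α_i} ∏_{βᵢ < 0} y_i^{-β_i}`,
where `c = ∑ β_i g_i`. -/
noncomputable def Gpoly (K : Type*) [Field K] (n : ℕ) (hn : 0 < n)
    (g : Fin (n - 1) → ℕ) (α β : Fin (n - 1) → ℤ) : MvPolynomial (Fin n ⊕ Fin n) K :=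
  X (Sum.inl (lastIdx n hn)) ^ (-(∑ i, β i * g i)).toNat
      * (∏ i : Fin (n - 1), X (Sum.inl (Fin.castLE (by omega) i)) ^ (α i).toNat)
      * (∏ i : Fin (n - 1), X (Sum.inr (Fin.castLE (by omega) i)) ^ (β i).toNat)
    - X (Sum.inr (lastIdx n hn))
      * X (Sum.inl (lastIdx n hn)) ^ (∑ i, β i * g i).toNat
      * (∏ i : Fin (n - 1), X (Sum.inl (Fin.castLE (by omega) i)) ^ (-(α i)).toNat)
      * (∏ i : Fin (n - 1), X (Sum.inr (Fin.castLE (by omega) i)) ^ (-(β i)).toNat)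

/-- The common zero set in `K^{2n}` of the `n + 1` binomials
`F_1, …, F_{n-1}, F, G` is exactly `V`. -/
theorem toric_zero_set_of_explicit_binomials
    (K : Type*) [Field K] [IsAlgClosed K]
    (n : ℕ) (hn : 3 ≤ n)
    (d f g h : Fin (n - 1) → ℕ)
    (hd : ∀ i, 0 < d i) (hf : ∀ i, 0 < f i) (hg : ∀ i, 0 < g i) (hh : ∀ i, 0 < h i)
    (hdf : ∀ i, Nat.Coprime (d i) (f i))
    (hdh : ∀ i, Nat.Coprime (d i) (h i))
    (hdd : ∀ i j, i ≠ j → Nat.Coprime (d i) (d j))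
    (α β : Fin (n - 1) → ℤ)
    (hbez : ∀ i, (h i : ℤ) = α i * d i + β i * f i) :
    ∀ w : Fin n ⊕ Fin n → K,
      ((∀ i : Fin (n - 1), MvPolynomial.eval w (Fi K n (by omega) d f g i) = 0) ∧
        MvPolynomial.eval w (Fbig K n (by omega) d h) = 0 ∧
        MvPolynomial.eval w (Gpoly K n (by omega) g α β) = 0)
      ↔ w ∈ Set.range (phiMap n d f g h) := by
  have hpos : 0 < n := by omega
  have hle : n - 1 ≤ n := by omega
  intro w
  constructor
  · rintro ⟨h1, h2, h3⟩
    have E1 : ∀ i : Fin (n - 1), w (Sum.inr (Fin.castLE hle i)) ^ d i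
        = w (Sum.inl (Fin.castLE hle i)) ^ f i
          * w (Sum.inl (lastIdx n hpos)) ^ (d i * g i) := by
      intro i
      have := h1 i
      simp only [Fi, map_sub, map_mul, map_pow, eval_X] at this
      exact sub_eq_zero.mp this
    have E2 : w (Sum.inr (lastIdx n hpos)) ^ (∏ j, d j)
        = ∏ i, w (Sum.inl (Fin.castLE hle i)) ^ (h i * ((∏ j, d j) / d i)) := by
      have := h2
      simp only [Fbig, map_sub, map_pow, map_prod, eval_X] at this
      exact sub_eq_zero.mp this
    have E3 : w (Sum.inl (lastIdx n hpos)) ^ (-(∑ i, β i * g i)).toNat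
          * (∏ i, w (Sum.inl (Fin.castLE hle i)) ^ (α i).toNat)
          * (∏ i, w (Sum.inr (Fin.castLE hle i)) ^ (β i).toNat)
        = w (Sum.inr (lastIdx n hpos)) * w (Sum.inl (lastIdx n hpos)) ^ ((∑ i, β i * g i)).toNat
          * (∏ i, w (Sum.inl (Fin.castLE hle i)) ^ (-(α i)).toNat)
          * (∏ i, w (Sum.inr (Fin.castLE hle i)) ^ (-(β i)).toNat) := by
      have := h3
      simp only [Gpoly, map_sub, map_mul, map_pow, map_prod, eval_X] at this
      exact sub_eq_zero.mp this
    obtain ⟨u, hu1, hu2, hu3⟩ := key_lemma d f g h hd hf hg hh hdf hdh hdd α β hbez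
      (fun i => w (Sum.inl (Fin.castLE hle i))) (fun i => w (Sum.inr (Fin.castLE hle i)))
      (w (Sum.inl (lastIdx n hpos))) (w (Sum.inr (lastIdx n hpos))) E1 E2 E3
    refine ⟨fun j => if hj : j.1 < n - 1 then u ⟨j.1, hj⟩ else w (Sum.inl j), ?_⟩
    funext z
    rcases z with j | j
    · simp only [phiMap, Sum.elim_inl]
      by_cases hj : j.1 < n - 1
      · rw [dif_pos hj, dif_pos hj]
        exact hu1 ⟨j.1, hj⟩
      · rw [dif_neg hj, dif_neg hj]
    · simp only [phiMap, Sum.elim_inr]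
      by_cases hj : j.1 < n - 1
      · rw [dif_pos hj, dif_pos hj, dif_neg (show ¬ (n - 1 < n - 1) from lt_irrefl _)]
        exact (hu2 ⟨j.1, hj⟩).symm
      · rw [dif_neg hj]
        have hj' : j = lastIdx n hpos := Fin.ext (by have := j.isLt; simp [lastIdx]; omega)
        have hprod : (∏ j' : Fin (n - 1),
            (if hj : (Fin.castLE (show n - 1 ≤ n by omega) j').1 < n - 1 then
              u ⟨(Fin.castLE (show n - 1 ≤ n by omega) j').1, hj⟩
             else w (Sum.inl (Fin.castLE (show n - 1 ≤ n by omega) j'))) ^ h j')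
            = ∏ j' : Fin (n - 1), u j' ^ h j' := by
          refine Finset.prod_congr rfl fun j' _ => ?_
          rw [dif_pos (show (Fin.castLE (show n - 1 ≤ n by omega) j').1 < n - 1 from j'.isLt)]
          rfl
        rw [hprod, ← hu3, hj']
  · rintro ⟨v, rfl⟩
    have hvx : ∀ i : Fin (n - 1), phiMap n d f g h v (Sum.inl (Fin.castLE hle i))
        = v (Fin.castLE hle i) ^ d i := by
      intro i
      simp only [phiMap, Sum.elim_inl]
      rw [dif_pos (show (Fin.castLE hle i).1 < n - 1 from i.isLt)]
      rfl
    have hvxn : phiMap n d f g h v (Sum.inl (lastIdx n hpos)) = v (lastIdx n hpos) := by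
      simp only [phiMap, Sum.elim_inl]
      rw [dif_neg (show ¬ ((lastIdx n hpos).1 < n - 1) from lt_irrefl _)]
    have hvy : ∀ i : Fin (n - 1), phiMap n d f g h v (Sum.inr (Fin.castLE hle i))
        = v (Fin.castLE hle i) ^ f i * v (lastIdx n hpos) ^ g i := by
      intro i
      simp only [phiMap, Sum.elim_inr]
      rw [dif_pos (show (Fin.castLE hle i).1 < n - 1 from i.isLt)]
      rfl
    have hvyn : phiMap n d f g h v (Sum.inr (lastIdx n hpos))
        = ∏ j' : Fin (n - 1), v (Fin.castLE hle j') ^ h j' := by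
      simp only [phiMap, Sum.elim_inr]
      rw [dif_neg (show ¬ ((lastIdx n hpos).1 < n - 1) from lt_irrefl _)]
    refine ⟨fun i => ?_, ?_, ?_⟩
    · simp only [Fi, map_sub, map_mul, map_pow, eval_X, hvx, hvy, hvxn]
      rw [sub_eq_zero]
      ring
    · simp only [Fbig, map_sub, map_pow, map_prod, eval_X, hvx, hvyn]
      rw [sub_eq_zero]
      exact idF d h hd _
    · simp only [Gpoly, map_sub, map_mul, map_pow, map_prod, eval_X, hvx, hvy, hvxn, hvyn]
      rw [sub_eq_zero]
      exact idG d f g h α β hbez _ _
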